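/- arXiv:2312.05852 — 5 statements merged into one kernel-verified Lean document; each statement's English description precedes it below -/
import Mathlib

section
/- For any DoS sequence ξ, the limit superior as t → +∞ of |Ξ(0,t)|/t equals inf D(ξ), the infimum of the set of duration-bounds of ξ. -/
open MeasureTheory Filter Set

/-- The union of all DoS intervals `[h n, h n + τ n)`, `n ≥ 1`. -/
def DoSUnion (h τ : ℕ → ℝ) : Set ℝ :=
  ⋃ n ∈ Set.Ici (1 : ℕ), Set.Ico (h n) (h n + τ n)

/-- `|Ξ(0,t)|`: the Lebesgue measure of the part of `[0,t]` under DoS attack. -/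
noncomputable def xiMeas (h τ : ℕ → ℝ) (t : ℝ) : ℝ :=
  (volume (DoSUnion h τ ∩ Set.Icc 0 t)).toReal

/-- `n_ξ(0,t)`: the number of DoS off-to-on transitions `h n` lying in `[0,t]`. -/
noncomputable def nXi (h : ℕ → ℝ) (t : ℝ) : ℕ :=
  Set.ncard ({x : ℝ | ∃ n : ℕ, 1 ≤ n ∧ h n = x} ∩ Set.Icc 0 t)

/-- `ξ = (h, τ)` is a DoS sequence. -/
def IsDoS (h τ : ℕ → ℝ) : Prop :=
  0 ≤ h 1 ∧ (∀ n, 1 ≤ n → 0 ≤ τ n) ∧ (∀ n, 1 ≤ n → h n + τ n < h (n + 1))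

/-- `B` is a duration-bound of `ξ`. -/
def IsDurationBound (h τ : ℕ → ℝ) (B : ℝ) : Prop :=
  0 ≤ B ∧ B ≤ 1 ∧ ∃ κ > (0 : ℝ), ∀ t ≥ (0 : ℝ), xiMeas h τ t ≤ κ + B * t

/-- `D(ξ)`: the set of duration-bounds of `ξ`. -/
def durBounds (h τ : ℕ → ℝ) : Set ℝ := {B | IsDurationBound h τ B}

/-- `B` is a (finite) frequency-bound of `ξ`. -/
def IsFreqBound (h : ℕ → ℝ) (B : ℝ) : Prop :=
  0 ≤ B ∧ ∃ Λ > (0 : ℝ), ∀ t ≥ (0 : ℝ), (nXi h t : ℝ) ≤ Λ + B * t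

/-- `F(ξ)`: the set of finite frequency-bounds of `ξ`. -/
def freqBounds (h : ℕ → ℝ) : Set ℝ := {B | IsFreqBound h B}

/-- Assumption 1: `ξ` is not an edge case. -/
def Assumption1 (h τ : ℕ → ℝ) : Prop :=
  sInf (durBounds h τ) < 1 ∧ (freqBounds h).Nonempty ∧
    ∃ Γ > (0 : ℝ), ∀ n, 1 ≤ n → τ n ≤ Γ

/-- `Bd` is the duration estimator generated by (8). -/
def IsDurEstimator (h τ : ℕ → ℝ) (l : ℕ) (ε₀ θ : ℝ) (Bd : ℝ → ℝ) : Prop :=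
  (∀ t, 0 ≤ t → t < h l + τ l → Bd t = ε₀) ∧
  ∀ n, ∀ hn : l ≤ n, ∀ t, h n + τ n ≤ t → t < h (n + 1) + τ (n + 1) →
    Bd t = (Finset.Icc l n).sup' (Finset.nonempty_Icc.mpr hn)
      (fun i => max ε₀ (θ * (xiMeas h τ (h i + τ i) / (h i + τ i)) + (1 - θ)))

/-- `Bf` is the frequency estimator generated by (9). -/
def IsFreqEstimator (h : ℕ → ℝ) (l : ℕ) (ε₀ θ : ℝ) (Bf : ℝ → ℝ) : Prop :=
  (∀ t, 0 ≤ t → t < h l → Bf t = ε₀) ∧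
  ∀ n, ∀ hn : l ≤ n, ∀ t, h n ≤ t → t < h (n + 1) →
    Bf t = (Finset.Icc l n).sup' (Finset.nonempty_Icc.mpr hn)
      (fun i => max ε₀ (((i : ℝ) / h i) / θ))

/-- Lemma 1, (5): `limsup_{t → ∞} |Ξ(0,t)|/t = inf D(ξ)`. -/
theorem limsup_xiMeas_div_eq_sInf_durBounds (h τ : ℕ → ℝ) (hξ : IsDoS h τ) :
    Filter.limsup (fun t : ℝ => xiMeas h τ t / t) Filter.atTop
      = sInf (durBounds h τ) := by
  classical
  have hnn : ∀ t : ℝ, 0 ≤ xiMeas h τ t := fun t => ENNReal.toReal_nonneg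
  have hle : ∀ t : ℝ, 0 ≤ t → xiMeas h τ t ≤ t := by
    intro t ht
    have hm : volume (DoSUnion h τ ∩ Set.Icc 0 t) ≤ volume (Set.Icc 0 t) :=
      measure_mono inter_subset_right
    rw [Real.volume_Icc, sub_zero] at hm
    exact ENNReal.toReal_le_of_le_ofReal ht hm
  -- bounds on the function f t = xiMeas h τ t / t, eventually
  have hb1 : ∀ᶠ t : ℝ in atTop, xiMeas h τ t / t ≤ 1 := by
    filter_upwards [eventually_ge_atTop (1 : ℝ)] with t ht
    have ht0 : (0 : ℝ) < t := lt_of_lt_of_le one_pos ht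
    rw [div_le_one ht0]
    exact hle t ht0.le
  have hb0 : ∀ᶠ t : ℝ in atTop, (0 : ℝ) ≤ xiMeas h τ t / t := by
    filter_upwards [eventually_ge_atTop (1 : ℝ)] with t ht
    exact div_nonneg (hnn t) (le_trans zero_le_one ht)
  have hbdd : IsBoundedUnder (· ≤ ·) atTop (fun t : ℝ => xiMeas h τ t / t) :=
    ⟨1, hb1⟩
  have hbddge : IsBoundedUnder (· ≥ ·) atTop (fun t : ℝ => xiMeas h τ t / t) :=
    ⟨0, hb0⟩
  have hcob : IsCoboundedUnder (· ≤ ·) atTop (fun t : ℝ => xiMeas h τ t / t) :=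
    hbddge.isCoboundedUnder_flip
  set L := Filter.limsup (fun t : ℝ => xiMeas h τ t / t) Filter.atTop with hL
  have hL0 : 0 ≤ L := le_limsup_of_frequently_le hb0.frequently hbdd
  have hL1 : L ≤ 1 := limsup_le_of_le hcob hb1
  -- D(ξ) is nonempty (contains 1) and bounded below
  have hone : (1 : ℝ) ∈ durBounds h τ := by
    refine ⟨zero_le_one, le_refl 1, 1, one_pos, ?_⟩
    intro t ht
    have := hle t ht
    linarith
  have hbdlow : BddBelow (durBounds h τ) :=
    ⟨0, fun B hB => hB.1⟩
  -- direction 1 : L ≤ sInf D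
  have h1 : L ≤ sInf (durBounds h τ) := by
    refine le_csInf ⟨1, hone⟩ ?_
    rintro B ⟨hB0, hB1, κ, hκ, hκB⟩
    have htend : Tendsto (fun t : ℝ => κ / t + B) atTop (nhds B) := by
      have := (tendsto_const_nhds (α := ℝ) (x := κ)).div_atTop tendsto_id
      simpa using this.add (tendsto_const_nhds (x := B))
    have hev : (fun t : ℝ => xiMeas h τ t / t) ≤ᶠ[atTop]
        (fun t : ℝ => κ / t + B) := by
      filter_upwards [eventually_ge_atTop (1 : ℝ)] with t ht
      have ht0 : (0 : ℝ) < t := lt_of_lt_of_le one_pos ht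
      have := hκB t ht0.le
      rw [div_le_iff₀ ht0]
      calc xiMeas h τ t ≤ κ + B * t := this
        _ = (κ / t + B) * t := by field_simp
    calc L ≤ Filter.limsup (fun t : ℝ => κ / t + B) atTop :=
          limsup_le_limsup hev hcob htend.isBoundedUnder_le
      _ = B := htend.limsup_eq
  -- direction 2 : sInf D ≤ L
  have h2 : sInf (durBounds h τ) ≤ L := by
    refine le_of_forall_pos_le_add ?_
    intro ε hε
    by_cases hcase : 1 ≤ L + ε
    · exact le_trans (csInf_le hbdlow hone) hcase
    push_neg at hcase
    have hmem : L + ε ∈ durBounds h τ := by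
      refine ⟨by linarith, hcase.le, ?_⟩
      have hlt : ∀ᶠ t : ℝ in atTop, xiMeas h τ t / t < L + ε :=
        eventually_lt_of_limsup_lt (by linarith) hbdd
      obtain ⟨T₀, hT₀⟩ := (hlt.and (eventually_ge_atTop (1 : ℝ))).exists_forall_of_atTop
      refine ⟨max T₀ 1, lt_of_lt_of_le one_pos (le_max_right _ _), ?_⟩
      intro t ht
      by_cases htT : max T₀ 1 ≤ t
      · have hht := hT₀ t (le_trans (le_max_left _ _) htT)
        have ht0 : (0 : ℝ) < t := lt_of_lt_of_le one_pos (le_trans (le_max_right _ _) htT)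
        have := (div_lt_iff₀ ht0).mp hht.1
        have hmax : (0 : ℝ) < max T₀ 1 := lt_of_lt_of_le one_pos (le_max_right _ _)
        nlinarith
      · push_neg at htT
        have : xiMeas h τ t ≤ t := hle t ht
        nlinarith
    exact csInf_le hbdlow hmem
  linarith
end

section
/- Let ξ be a DoS sequence with infinitely many DoS intervals satisfying Assumption 1. Then limsup_{n→∞} |Ξ(0, h_n + τ_n)| / (h_n + τ_n) = inf D(ξ). -/
open MeasureTheory Filter Set

section aux
variable (h τ : ℕ → ℝ)

lemma xiMeas_nonneg (t : ℝ) : 0 ≤ xiMeas h τ t := ENNReal.toReal_nonneg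

lemma volume_inter_ne_top (t : ℝ) : volume (DoSUnion h τ ∩ Set.Icc 0 t) ≠ ⊤ :=
  ne_top_of_le_ne_top measure_Icc_lt_top.ne (measure_mono Set.inter_subset_right)

lemma xiMeas_mono {s t : ℝ} (hst : s ≤ t) : xiMeas h τ s ≤ xiMeas h τ t :=
  ENNReal.toReal_mono (volume_inter_ne_top h τ t)
    (measure_mono (Set.inter_subset_inter_right _ (Set.Icc_subset_Icc_right hst)))

lemma xiMeas_le (t : ℝ) : xiMeas h τ t ≤ max t 0 := by
  calc xiMeas h τ t ≤ (volume (Set.Icc (0:ℝ) t)).toReal :=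
        ENNReal.toReal_mono measure_Icc_lt_top.ne (measure_mono Set.inter_subset_right)
    _ = max t 0 := by rw [Real.volume_Icc, sub_zero, ENNReal.toReal_ofReal']

variable {h τ}

lemma h_step (hξ : IsDoS h τ) {k : ℕ} (hk : 1 ≤ k) : h k < h (k + 1) :=
  lt_of_le_of_lt (le_add_of_nonneg_right (hξ.2.1 k hk)) (hξ.2.2 k hk)

lemma h_lt (hξ : IsDoS h τ) {m n : ℕ} (hm : 1 ≤ m) (hmn : m < n) : h m < h n := by
  induction n with
  | zero => omega
  | succ k ih =>
    rcases Nat.lt_succ_iff_lt_or_eq.mp hmn with hk | hk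
    · exact (ih hk).trans (h_step hξ (by omega))
    · subst hk; exact h_step hξ hm

lemma h_le (hξ : IsDoS h τ) {m n : ℕ} (hm : 1 ≤ m) (hmn : m ≤ n) : h m ≤ h n := by
  rcases eq_or_lt_of_le hmn with rfl | hlt
  · exact le_refl _
  · exact (h_lt hξ hm hlt).le

lemma s_lt_h (hξ : IsDoS h τ) {m n : ℕ} (hm : 1 ≤ m) (hmn : m < n) : h m + τ m < h n :=
  lt_of_lt_of_le (hξ.2.2 m hm) (h_le hξ (by omega) hmn)

lemma s_mono (hξ : IsDoS h τ) {m n : ℕ} (hm : 1 ≤ m) (hmn : m ≤ n) :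
    h m + τ m ≤ h n + τ n := by
  rcases eq_or_lt_of_le hmn with rfl | hlt
  · exact le_refl _
  · exact ((s_lt_h hξ hm hlt).trans_le (le_add_of_nonneg_right (hξ.2.1 n (by omega)))).le

lemma h_nonneg (hξ : IsDoS h τ) {n : ℕ} (hn : 1 ≤ n) : 0 ≤ h n :=
  hξ.1.trans (h_le hξ le_rfl hn)

lemma xiMeas_step (hξ : IsDoS h τ) {n : ℕ} (hn : 1 ≤ n) {t : ℝ}
    (ht2 : t < h (n+1) + τ (n+1)) :
    xiMeas h τ t ≤ xiMeas h τ (h n + τ n) + τ (n + 1) := by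
  have hsub : DoSUnion h τ ∩ Set.Icc 0 t ⊆
      (DoSUnion h τ ∩ Set.Icc 0 (h n + τ n)) ∪ Set.Ico (h (n+1)) (h (n+1) + τ (n+1)) := by
    rintro x ⟨hxU, hx0, hxt⟩
    have hxU' := hxU
    simp only [DoSUnion, Set.mem_iUnion, Set.mem_Ici, Set.mem_Ico, exists_prop] at hxU'
    obtain ⟨m, hm1, hxm1, hxm2⟩ := hxU'
    rcases Nat.lt_or_ge m (n+1) with hmn | hmn
    · left
      refine ⟨hxU, hx0, le_of_lt (lt_of_lt_of_le hxm2 (s_mono hξ hm1 (by omega)))⟩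
    · rcases Nat.lt_or_ge m (n+2) with hmn2 | hmn2
      · right
        have : m = n + 1 := by omega
        subst this
        exact ⟨hxm1, hxm2⟩
      · exfalso
        have h1 : h (n+1) + τ (n+1) < h (n+2) := hξ.2.2 (n+1) (by omega)
        have h2 : h (n+2) ≤ h m := h_le hξ (by omega) hmn2
        linarith
  have hvol := (measure_mono hsub).trans (measure_union_le (μ := volume) _ _)
  have hIco : volume (Set.Ico (h (n+1)) (h (n+1) + τ (n+1))) = ENNReal.ofReal (τ (n+1)) := by
    rw [Real.volume_Ico, add_sub_cancel_left]
  rw [hIco] at hvol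
  have hne : volume (DoSUnion h τ ∩ Set.Icc 0 (h n + τ n)) + ENNReal.ofReal (τ (n+1)) ≠ ⊤ :=
    ENNReal.add_ne_top.mpr ⟨volume_inter_ne_top h τ _, ENNReal.ofReal_ne_top⟩
  have := ENNReal.toReal_mono hne hvol
  rw [ENNReal.toReal_add (volume_inter_ne_top h τ _) ENNReal.ofReal_ne_top,
    ENNReal.toReal_ofReal (hξ.2.1 (n+1) (by omega))] at this
  exact this

end aux

section p2
variable {h : ℕ → ℝ}

variable {h : ℕ → ℝ}
-- abstract hypotheses so I can test independent of earlier file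
lemma nXi_val (h0 : 0 ≤ h 1) (hlt : ∀ m n : ℕ, 1 ≤ m → m < n → h m < h n)
    {N : ℕ} (hN : 1 ≤ N) : nXi h (h N) = N := by
  have hle : ∀ m n : ℕ, 1 ≤ m → m ≤ n → h m ≤ h n := by
    intro m n hm hmn
    rcases eq_or_lt_of_le hmn with rfl | l
    · exact le_refl _
    · exact (hlt m n hm l).le
  have hset : {x : ℝ | ∃ n : ℕ, 1 ≤ n ∧ h n = x} ∩ Set.Icc 0 (h N)
      = h '' Set.Icc 1 N := by
    ext x
    constructor
    · rintro ⟨⟨m, hm1, rfl⟩, hx0, hxN⟩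
      refine ⟨m, ⟨hm1, ?_⟩, rfl⟩
      by_contra hc
      push_neg at hc
      exact absurd hxN (not_le.mpr (hlt N m hN hc))
    · rintro ⟨m, ⟨hm1, hmN⟩, rfl⟩
      exact ⟨⟨m, hm1, rfl⟩, h0.trans (hle 1 m le_rfl hm1), hle m N hm1 hmN⟩
  have hinj : Set.InjOn h (Set.Icc 1 N) := by
    intro a ha b hb hab
    by_contra hne
    rcases Nat.lt_or_ge a b with l | ge
    · exact absurd hab (ne_of_lt (hlt a b ha.1 l))
    · have : b < a := by omega
      exact absurd hab.symm (ne_of_lt (hlt b a hb.1 this))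
  rw [nXi, hset, Set.ncard_image_of_injOn hinj, ← Finset.coe_Icc, Set.ncard_coe_finset]
  simp [hN]

lemma h_tendsto (h0 : 0 ≤ h 1) (hlt : ∀ m n : ℕ, 1 ≤ m → m < n → h m < h n)
    {B Λ : ℝ} (hB : 0 ≤ B) (hΛ : 0 < Λ)
    (hbd : ∀ t ≥ (0:ℝ), (nXi h t : ℝ) ≤ Λ + B * t) :
    Tendsto h atTop atTop := by
  have hle : ∀ m n : ℕ, 1 ≤ m → m ≤ n → h m ≤ h n := by
    intro m n hm hmn
    rcases eq_or_lt_of_le hmn with rfl | l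
    · exact le_refl _
    · exact (hlt m n hm l).le
  have key : ∀ M : ℝ, ∃ N : ℕ, 1 ≤ N ∧ M ≤ h N := by
    intro M
    by_contra hc
    push_neg at hc
    have hMpos : 0 < M := lt_of_le_of_lt h0 (hc 1 le_rfl)
    obtain ⟨N, hN⟩ := exists_nat_gt (Λ + B * M)
    have hN1 : 1 ≤ max N 1 := le_max_right _ _
    have hval := nXi_val h0 hlt hN1
    have hge0 : (0:ℝ) ≤ h (max N 1) := h0.trans (hle 1 _ le_rfl hN1)
    have := hbd (h (max N 1)) hge0
    rw [hval] at this
    have hhM : h (max N 1) < M := hc _ hN1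
    have h2 : ((max N 1 : ℕ) : ℝ) ≤ Λ + B * M := by nlinarith
    have h3 : (N : ℝ) ≤ ((max N 1 : ℕ) : ℝ) := by exact_mod_cast le_max_left N 1
    linarith
  rw [tendsto_atTop]
  intro M
  obtain ⟨N, hN1, hNM⟩ := key M
  filter_upwards [eventually_ge_atTop N] with n hn
  exact hNM.trans (hle N n hN1 hn)

end p2

/-- Lemma 2, (16): for an (infinite) DoS sequence satisfying Assumption 1,
`limsup_{n → ∞} |Ξ(0, h n + τ n)|/(h n + τ n) = inf D(ξ)`. -/
theorem limsup_seq_duration (h τ : ℕ → ℝ) (hξ : IsDoS h τ)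
    (hA1 : Assumption1 h τ) :
    Filter.limsup (fun n : ℕ => xiMeas h τ (h n + τ n) / (h n + τ n))
      Filter.atTop = sInf (durBounds h τ) := by
  obtain ⟨hD1, ⟨Bf, hBf0, Λ, hΛ, hfbd⟩, Γ, hΓ, hΓbd⟩ := hA1
  set u : ℕ → ℝ := fun n : ℕ => xiMeas h τ (h n + τ n) / (h n + τ n) with hu
  have hht : Tendsto h atTop atTop :=
    h_tendsto hξ.1 (fun m n hm hmn => h_lt hξ hm hmn) hBf0 hΛ hfbd
  have hst : Tendsto (fun n => h n + τ n) atTop atTop := by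
    apply tendsto_atTop_mono' atTop ?_ hht
    filter_upwards [eventually_ge_atTop 1] with n hn
    exact le_add_of_nonneg_right (hξ.2.1 n hn)
  have hu01 : ∀ n, 0 ≤ u n ∧ u n ≤ 1 := by
    intro n
    rcases le_or_gt (h n + τ n) 0 with hle | hpos
    · have hf0 : xiMeas h τ (h n + τ n) = 0 :=
        le_antisymm ((xiMeas_le h τ _).trans (le_of_eq (max_eq_right hle)))
          (xiMeas_nonneg h τ _)
      constructor <;> simp [hu, hf0]
    · refine ⟨div_nonneg (xiMeas_nonneg h τ _) hpos.le, (div_le_one hpos).mpr ?_⟩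
      exact (xiMeas_le h τ _).trans (le_of_eq (max_eq_left hpos.le))
  have hbd_above : IsBoundedUnder (· ≤ ·) atTop u :=
    isBoundedUnder_of ⟨1, fun n => (hu01 n).2⟩
  have hbd_below : IsBoundedUnder (· ≥ ·) atTop u :=
    isBoundedUnder_of ⟨0, fun n => (hu01 n).1⟩
  have hcob : IsCoboundedUnder (· ≤ ·) atTop u := hbd_below.isCobounded_le
  have oneD : (1:ℝ) ∈ durBounds h τ := by
    refine ⟨zero_le_one, le_rfl, 1, one_pos, fun t ht => ?_⟩
    have := xiMeas_le h τ t
    rw [max_eq_left ht] at this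
    linarith
  have Dne : (durBounds h τ).Nonempty := ⟨1, oneD⟩
  have Dbdd : BddBelow (durBounds h τ) := ⟨0, fun B hB => hB.1⟩
  have dir1 : limsup u atTop ≤ sInf (durBounds h τ) := by
    apply le_csInf Dne
    rintro B ⟨hB0, hB1, κ, hκ, hbd⟩
    apply le_of_forall_pos_le_add
    intro ε hε
    apply limsup_le_of_le hcob
    filter_upwards [hst.eventually_ge_atTop (max (κ / ε) 1)] with n hn
    have hpos : (0:ℝ) < h n + τ n := lt_of_lt_of_le zero_lt_one ((le_max_right _ _).trans hn)
    have hf := hbd (h n + τ n) hpos.le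
    have hκs : κ ≤ ε * (h n + τ n) := by
      have := (le_max_left (κ / ε) 1).trans hn
      rw [div_le_iff₀ hε] at this
      nlinarith
    show xiMeas h τ (h n + τ n) / (h n + τ n) ≤ B + ε
    rw [div_le_iff₀ hpos]
    nlinarith
  have L0 : 0 ≤ limsup u atTop :=
    le_limsup_of_frequently_le (Frequently.of_forall fun n => (hu01 n).1) hbd_above
  have dir2 : sInf (durBounds h τ) ≤ limsup u atTop := by
    by_contra hcon
    push_neg at hcon
    set L := limsup u atTop with hL
    set B := (L + sInf (durBounds h τ)) / 2 with hBdef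
    have hLB : L < B := by rw [hBdef]; linarith
    have hBI : B < sInf (durBounds h τ) := by rw [hBdef]; linarith
    have hB0 : 0 ≤ B := by rw [hBdef]; linarith
    have hB1 : B ≤ 1 := by
      have := csInf_le Dbdd oneD
      rw [hBdef]; linarith
    have hev1 : ∀ᶠ n in atTop, u n < B := eventually_lt_of_limsup_lt hLB hbd_above
    have hev2 : ∀ᶠ n in atTop, (1:ℝ) ≤ h n + τ n := hst.eventually_ge_atTop 1
    obtain ⟨N, hN⟩ := eventually_atTop.mp ((hev1.and hev2).and (eventually_ge_atTop 1))
    obtain ⟨⟨_, hsN⟩, hN1⟩ := hN N le_rfl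
    have hfs : ∀ n, N ≤ n → xiMeas h τ (h n + τ n) ≤ B * (h n + τ n) := by
      intro n hn
      obtain ⟨⟨hub, hsn⟩, _⟩ := hN n hn
      have hpos : (0:ℝ) < h n + τ n := lt_of_lt_of_le zero_lt_one hsn
      exact ((div_lt_iff₀ hpos).mp hub).le
    have hBmem : B ∈ durBounds h τ := by
      refine ⟨hB0, hB1, Γ + (h N + τ N) + 1, by linarith, fun t ht => ?_⟩
      rcases lt_or_ge t (h N + τ N) with hlt | hge
      · have hfle := xiMeas_le h τ t
        rw [max_eq_left ht] at hfle
        nlinarith [mul_nonneg hB0 ht]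
      · have hex : ∃ k : ℕ, t < h (N + k + 1) + τ (N + k + 1) := by
          obtain ⟨M, hM⟩ := eventually_atTop.mp (hst.eventually_gt_atTop t)
          exact ⟨M, hM (N + M + 1) (by omega)⟩
        obtain ⟨k, hk1, hkmin⟩ : ∃ k, (t < h (N+k+1) + τ (N+k+1)) ∧
            ∀ j, j < k → ¬(t < h (N+j+1) + τ (N+j+1)) :=
          ⟨Nat.find hex, Nat.find_spec hex, fun j hj => Nat.find_min hex hj⟩
        have hk0 : h (N + k) + τ (N + k) ≤ t := by
          rcases Nat.eq_zero_or_pos k with rfl | hkpos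
          · simpa using hge
          · have := hkmin (k - 1) (by omega)
            rw [not_lt] at this
            have heq : N + (k - 1) + 1 = N + k := by omega
            rwa [heq] at this
        have hstep := xiMeas_step hξ (show 1 ≤ N + k by omega) hk1
        have hmono := hfs (N + k) (by omega)
        have hτΓ : τ (N + k + 1) ≤ Γ := hΓbd _ (by omega)
        have hBt : B * (h (N+k) + τ (N+k)) ≤ B * t := mul_le_mul_of_nonneg_left hk0 hB0
        linarith
    exact absurd (csInf_le Dbdd hBmem) (not_le.mpr hBI)
  exact le_antisymm dir1 dir2
end

section
/- Let ξ be a DoS sequence with infinitely many DoS intervals satisfying Assumption 1. Then limsup_{n→∞} n / h_n = inf F(ξ). -/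
open MeasureTheory Filter Set

section Aux

open Filter Set

lemma dos_mono (h τ : ℕ → ℝ) (hξ : IsDoS h τ) :
    ∀ m n, 1 ≤ m → m ≤ n → h m ≤ h n := by
  intro m n hm hmn
  induction n with
  | zero => omega
  | succ k ih =>
    rcases Nat.lt_or_ge m (k+1) with hlt | hge
    · have hk : m ≤ k := by omega
      have h1k : 1 ≤ k := by omega
      have := hξ.2.2 k h1k
      have := hξ.2.1 k h1k
      have := ih hk
      linarith
    · have : m = k + 1 := by omega
      simp [this]

lemma dos_smono (h τ : ℕ → ℝ) (hξ : IsDoS h τ) :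
    ∀ m n, 1 ≤ m → m < n → h m < h n := by
  intro m n hm hmn
  have h1 : h m + τ m < h (m+1) := hξ.2.2 m hm
  have h2 : 0 ≤ τ m := hξ.2.1 m hm
  have h3 : h (m+1) ≤ h n := dos_mono h τ hξ (m+1) n (by omega) (by omega)
  linarith

lemma dos_nonneg (h τ : ℕ → ℝ) (hξ : IsDoS h τ) :
    ∀ n, 1 ≤ n → 0 ≤ h n := fun n hn =>
  hξ.1.trans (dos_mono h τ hξ 1 n le_rfl hn)

lemma nXi_ht (h τ : ℕ → ℝ) (hξ : IsDoS h τ) (k : ℕ) (hk : 1 ≤ k) :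
    nXi h (h k) = k := by
  have hset : {x : ℝ | ∃ n : ℕ, 1 ≤ n ∧ h n = x} ∩ Set.Icc 0 (h k)
      = ↑((Finset.Icc 1 k).image h) := by
    ext x
    simp only [Finset.coe_image, Set.mem_image, Finset.mem_coe, Finset.mem_Icc,
      Set.mem_inter_iff, Set.mem_setOf_eq, Set.mem_Icc]
    constructor
    · rintro ⟨⟨n, hn1, rfl⟩, _, hle⟩
      refine ⟨n, ⟨hn1, ?_⟩, rfl⟩
      by_contra hc
      exact absurd hle (not_le.mpr (dos_smono h τ hξ k n hk (by omega)))
    · rintro ⟨n, ⟨hn1, hnk⟩, rfl⟩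
      exact ⟨⟨n, hn1, rfl⟩, dos_nonneg h τ hξ n hn1,
        dos_mono h τ hξ n k hn1 hnk⟩
  rw [nXi, hset, Set.ncard_coe_finset,
    Finset.card_image_of_injOn, Nat.card_Icc]
  · omega
  · intro a ha b hb hab
    simp only [Finset.coe_Icc, Set.mem_Icc] at ha hb
    by_contra hne
    rcases Nat.lt_or_ge a b with hl | hg
    · exact absurd hab (ne_of_lt (dos_smono h τ hξ a b ha.1 hl))
    · exact absurd hab.symm (ne_of_lt (dos_smono h τ hξ b a hb.1 (by omega)))

lemma nXi_le (h τ : ℕ → ℝ) (hξ : IsDoS h τ) (t : ℝ) (M : ℕ)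
    (hM : ∀ n : ℕ, 1 ≤ n → h n ≤ t → n ≤ M) : nXi h t ≤ M := by
  have hsub : {x : ℝ | ∃ n : ℕ, 1 ≤ n ∧ h n = x} ∩ Set.Icc 0 t
      ⊆ ↑((Finset.Icc 1 M).image h) := by
    rintro x ⟨⟨n, hn1, rfl⟩, _, hle⟩
    simp only [Finset.coe_image, Set.mem_image, Finset.mem_coe, Finset.mem_Icc]
    exact ⟨n, ⟨hn1, hM n hn1 hle⟩, rfl⟩
  calc nXi h t ≤ ((Finset.Icc 1 M).image h).card := by
        rw [← Set.ncard_coe_finset]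
        exact Set.ncard_le_ncard hsub (Finset.finite_toSet _)
    _ ≤ (Finset.Icc 1 M).card := Finset.card_image_le
    _ = M := by rw [Nat.card_Icc]; omega

end Aux

/-- Lemma 2, (17): for an (infinite) DoS sequence satisfying Assumption 1,
`limsup_{n → ∞} n / h n = inf F(ξ)`. -/
theorem limsup_seq_frequency (h τ : ℕ → ℝ) (hξ : IsDoS h τ)
    (hA1 : Assumption1 h τ) :
    Filter.limsup (fun n : ℕ => (n : ℝ) / h n) Filter.atTop
      = sInf (freqBounds h) :=  by
  obtain ⟨B₀, hB₀0, Λ₀, hΛ₀, hb₀⟩ := hA1.2.1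
  have hnn := dos_nonneg h τ hξ
  -- basic bound: k ≤ Λ₀ + B₀ * h k
  have hkb : ∀ k : ℕ, 1 ≤ k → (k : ℝ) ≤ Λ₀ + B₀ * h k := by
    intro k hk
    have := hb₀ (h k) (hnn k hk)
    rwa [nXi_ht h τ hξ k hk] at this
  -- h tends to infinity
  have hgrow : Filter.Tendsto h Filter.atTop Filter.atTop := by
    have hB1 : (0:ℝ) < B₀ + 1 := by linarith
    have hg : Filter.Tendsto (fun k : ℕ => ((k : ℝ) - Λ₀) / (B₀ + 1))
        Filter.atTop Filter.atTop := by
      apply Filter.Tendsto.atTop_div_const hB1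
      exact Filter.tendsto_atTop_add_const_right _ _ tendsto_natCast_atTop_atTop
    refine Filter.tendsto_atTop_mono' Filter.atTop ?_ hg
    filter_upwards [Filter.eventually_ge_atTop 1] with k hk
    rw [div_le_iff₀ hB1]
    have h1 := hkb k hk
    have h2 := hnn k hk
    nlinarith
  have hev1 : ∀ᶠ k : ℕ in Filter.atTop, 1 ≤ h k := hgrow.eventually_ge_atTop 1
  -- boundedness of the sequence k / h k
  have hBdd : Filter.IsBoundedUnder (· ≤ ·) Filter.atTop
      (fun n : ℕ => (n : ℝ) / h n) := by
    apply Filter.isBoundedUnder_of_eventually_le (a := Λ₀ + B₀)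
    filter_upwards [hev1, Filter.eventually_ge_atTop 1] with k hk1 hk
    have hpos : (0:ℝ) < h k := by linarith
    rw [div_le_iff₀ hpos]
    have := hkb k hk
    nlinarith
  have hnonneg : ∀ᶠ k : ℕ in Filter.atTop, 0 ≤ (k : ℝ) / h k := by
    filter_upwards [hev1] with k hk1
    positivity
  have hCobdd : Filter.IsCoboundedUnder (· ≤ ·) Filter.atTop
      (fun n : ℕ => (n : ℝ) / h n) :=
    Filter.IsBoundedUnder.isCoboundedUnder_le
      (Filter.isBoundedUnder_of_eventually_le (α := ℝᵒᵈ) hnonneg)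
  set L := Filter.limsup (fun n : ℕ => (n : ℝ) / h n) Filter.atTop with hL
  have hL0 : 0 ≤ L :=
    Filter.le_limsup_of_frequently_le hnonneg.frequently hBdd
  -- limsup ≤ every frequency bound
  have hle : ∀ B ∈ freqBounds h, L ≤ B := by
    rintro B ⟨hB0, Λ, hΛ, hb⟩
    have key : ∀ ε > (0:ℝ), L ≤ B + ε := by
      intro ε hε
      refine Filter.limsup_le_of_le hCobdd ?_
      have hevΛ : ∀ᶠ k : ℕ in Filter.atTop, Λ / ε ≤ h k :=
        hgrow.eventually_ge_atTop (Λ / ε)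
      filter_upwards [hev1, hevΛ, Filter.eventually_ge_atTop 1] with k hk1 hkΛ hk
      have hpos : (0:ℝ) < h k := by linarith
      have hkb' : (k : ℝ) ≤ Λ + B * h k := by
        have := hb (h k) (hnn k hk)
        rwa [nXi_ht h τ hξ k hk] at this
      rw [div_le_iff₀ hpos]
      have hΛε : Λ ≤ ε * h k := by
        rw [div_le_iff₀ hε] at hkΛ; linarith
      nlinarith
    -- conclude
    by_contra hc
    push_neg at hc
    have := key ((L - B)/2) (by linarith)
    linarith
  have dir1 : L ≤ sInf (freqBounds h) :=
    le_csInf ⟨B₀, hB₀0, Λ₀, hΛ₀, hb₀⟩ hle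
  -- every L + ε is a frequency bound
  have dir2 : sInf (freqBounds h) ≤ L := by
    have hbdd : BddBelow (freqBounds h) := ⟨0, fun B hB => hB.1⟩
    refine le_of_forall_pos_le_add ?_
    intro ε hε
    refine csInf_le hbdd ?_
    have hLε : (0:ℝ) < L + ε := by linarith
    have hevlt : ∀ᶠ k : ℕ in Filter.atTop, (k : ℝ) / h k < L + ε :=
      Filter.eventually_lt_of_limsup_lt (by linarith) hBdd
    obtain ⟨N, hN⟩ := (hevlt.and hev1).exists_forall_of_atTop
    refine ⟨le_of_lt hLε, (N : ℝ) + 1, by positivity, ?_⟩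
    intro t ht
    have hMbound : ∀ n : ℕ, 1 ≤ n → h n ≤ t → n ≤ max N ⌊(L + ε) * t⌋₊ := by
      intro n hn1 hnt
      rcases Nat.lt_or_ge n N with hlt | hge
      · exact le_max_of_le_left (le_of_lt hlt)
      · obtain ⟨hlt, h1⟩ := hN n hge
        have hpos : (0:ℝ) < h n := by linarith
        have : (n : ℝ) < (L + ε) * h n := by
          rw [div_lt_iff₀ hpos] at hlt; linarith
        have hle' : (n : ℝ) ≤ (L + ε) * t := by nlinarith
        exact le_max_of_le_right (Nat.le_floor hle')
    have hcount := nXi_le h τ hξ t _ hMbound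
    calc (nXi h t : ℝ) ≤ (max N ⌊(L + ε) * t⌋₊ : ℕ) := by exact_mod_cast hcount
      _ ≤ (N : ℝ) + ⌊(L + ε) * t⌋₊ := by
          rcases max_cases N ⌊(L + ε) * t⌋₊ with ⟨heq, _⟩ | ⟨heq, _⟩ <;>
          · rw [heq]
            have h1 : (0:ℝ) ≤ (N:ℝ) := Nat.cast_nonneg N
            have h2 : (0:ℝ) ≤ (⌊(L + ε) * t⌋₊:ℝ) := Nat.cast_nonneg _
            linarith
      _ ≤ (N : ℝ) + 1 + (L + ε) * t := by
          have := Nat.floor_le (by positivity : (0:ℝ) ≤ (L + ε) * t)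
          linarith
  linarith
end

section
/- (Lemma 6: properties of the adaptive impulsive control intervals.) Let ξ be a DoS sequence satisfying Assumption 1, let B̂_d, B̂_f be generated by the DoS estimator with parameters ℓ ≥ 2, ε₀ ∈ (0,1), θ ∈ (0,1). Let μ ∈ (0,1), χ := ln μ < 0, β > 0, γ₃ > 1, Δ₀ := −χ/(γ₃β), and define control instants by t₁ = 0, t_{k+1} = t_k + Δ_k, where Δ_k = Δ₀ if t_k ∈ [0, h₁+τ₁), and Δ_k = χ·(1 − B̂_d(h_n+τ_n)) / (γ₃·(B̂_f(h_n)·χ − β)) if t_k ∈ [h_n+τ_n, h_{n+1}+τ_{n+1}). Then: (1) Δ_k ≤ Δ₀ < +∞ for all k; (2) there exists Δ̲ > 0 with Δ_k ≥ Δ̲ for all k; and (3) there exist a finite ť ≥ 0, Δ̄ > 0, a duration-bound B_d ∈ D(ξ) and a frequency-bound B_f ∈ F(ξ) such that Δ̄·(β − B_f·χ) < −χ·(1 − B_d) and Δ_k ≤ Δ̄ whenever t_k ≥ ť. -/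
open MeasureTheory Filter Set

namespace L6

variable {h τ : ℕ → ℝ}

lemma h_add_lt (hξ : IsDoS h τ) : ∀ m n, 1 ≤ m → m < n → h m + τ m < h n := by
  intro m n hm hmn
  induction n with
  | zero => omega
  | succ n ih =>
    rcases Nat.lt_or_ge m n with hlt | hge
    · have h1 := ih hlt
      have h2 := hξ.2.1 n (by omega)
      have h3 := hξ.2.2 n (by omega)
      linarith
    · have : m = n := by omega
      subst this
      exact hξ.2.2 m hm

lemma h_le (hξ : IsDoS h τ) {m n : ℕ} (hm : 1 ≤ m) (hmn : m ≤ n) : h m ≤ h n := by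
  rcases eq_or_lt_of_le hmn with rfl | hlt
  · exact le_rfl
  · have := h_add_lt hξ m n hm hlt
    have := hξ.2.1 m hm
    linarith

lemma h_lt (hξ : IsDoS h τ) {m n : ℕ} (hm : 1 ≤ m) (hmn : m < n) : h m < h n := by
  have := h_add_lt hξ m n hm hmn
  have := hξ.2.1 m hm
  linarith

lemma T_lt (hξ : IsDoS h τ) {m n : ℕ} (hm : 1 ≤ m) (hmn : m < n) :
    h m + τ m < h n + τ n := by
  have := h_add_lt hξ m n hm hmn
  have := hξ.2.1 n (by omega)
  linarith

lemma T_le (hξ : IsDoS h τ) {m n : ℕ} (hm : 1 ≤ m) (hmn : m ≤ n) :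
    h m + τ m ≤ h n + τ n := by
  rcases eq_or_lt_of_le hmn with rfl | hlt
  · exact le_rfl
  · exact (T_lt hξ hm hlt).le

lemma h_nonneg (hξ : IsDoS h τ) {n : ℕ} (hn : 1 ≤ n) : 0 ≤ h n :=
  le_trans hξ.1 (h_le hξ le_rfl hn)

lemma T_nonneg (hξ : IsDoS h τ) {n : ℕ} (hn : 1 ≤ n) : 0 ≤ h n + τ n := by
  have := h_nonneg hξ hn; have := hξ.2.1 n hn; linarith

lemma h_pos (hξ : IsDoS h τ) {n : ℕ} (hn : 2 ≤ n) : 0 < h n := by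
  have h1 : h 1 + τ 1 < h 2 := hξ.2.2 1 le_rfl
  have h2 : h 2 ≤ h n := h_le hξ (by omega) hn
  have := T_nonneg hξ (le_refl 1)
  linarith

lemma T_pos (hξ : IsDoS h τ) {n : ℕ} (hn : 2 ≤ n) : 0 < h n + τ n := by
  have := h_pos hξ hn; have := hξ.2.1 n (by omega); linarith


lemma measurable_DoSUnion : MeasurableSet (DoSUnion h τ) := by
  apply MeasurableSet.biUnion (Set.countable_univ.mono (Set.subset_univ _))
  intro n _
  exact measurableSet_Ico

lemma vol_ne_top (t : ℝ) : volume (DoSUnion h τ ∩ Set.Icc 0 t) ≠ ⊤ := by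
  apply ne_top_of_le_ne_top _ (measure_mono Set.inter_subset_right)
  rw [Real.volume_Icc]
  exact ENNReal.ofReal_ne_top

lemma xiMeas_nonneg (t : ℝ) : 0 ≤ xiMeas h τ t := ENNReal.toReal_nonneg

lemma xiMeas_le_self {t : ℝ} (ht : 0 ≤ t) : xiMeas h τ t ≤ t := by
  apply ENNReal.toReal_le_of_le_ofReal ht
  refine le_trans (measure_mono Set.inter_subset_right) ?_
  rw [Real.volume_Icc]
  simp

lemma xiMeas_mono {s t : ℝ} (hst : s ≤ t) : xiMeas h τ s ≤ xiMeas h τ t := by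
  apply ENNReal.toReal_mono (vol_ne_top t)
  exact measure_mono (Set.inter_subset_inter_right _ (Set.Icc_subset_Icc_right hst))

/-- increment bound: on `[hᵢ+τᵢ, hᵢ₊₁+τᵢ₊₁)` the attacked measure grows at most by `τᵢ₊₁`. -/
lemma xiMeas_incr (hξ : IsDoS h τ) {i : ℕ} (hi : 1 ≤ i) {t : ℝ}
    (h1 : h i + τ i ≤ t) (h2 : t < h (i + 1) + τ (i + 1)) :
    xiMeas h τ t ≤ xiMeas h τ (h i + τ i) + τ (i + 1) := by
  have hsub : DoSUnion h τ ∩ Set.Icc 0 t ⊆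
      (DoSUnion h τ ∩ Set.Icc 0 (h i + τ i)) ∪ Set.Ico (h (i+1)) (h (i+1) + τ (i+1)) := by
    rintro x ⟨hxU, hx0, hxt⟩
    simp only [DoSUnion, Set.mem_iUnion, Set.mem_Ici] at hxU
    obtain ⟨n, hn1, hxn⟩ := hxU
    rcases Nat.lt_or_ge n (i+1) with hni | hni
    · left
      refine ⟨?_, hx0, ?_⟩
      · simp only [DoSUnion, Set.mem_iUnion, Set.mem_Ici]
        exact ⟨n, hn1, hxn⟩
      · have : h n + τ n ≤ h i + τ i := T_le hξ hn1 (by omega)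
        exact le_trans hxn.2.le this
    · rcases Nat.lt_or_ge n (i+2) with hni2 | hni2
      · right
        have : n = i + 1 := by omega
        subst this
        exact hxn
      · exfalso
        have : h (i+1) + τ (i+1) < h n := h_add_lt hξ (i+1) n (by omega) (by omega)
        have := hxn.1
        linarith
  have hτ1 := hξ.2.1 (i+1) (by omega)
  calc xiMeas h τ t
      ≤ ((volume (DoSUnion h τ ∩ Set.Icc 0 (h i + τ i))) +
          volume (Set.Ico (h (i+1)) (h (i+1) + τ (i+1)))).toReal := by
        apply ENNReal.toReal_mono
        · rw [Real.volume_Ico]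
          exact ENNReal.add_ne_top.mpr ⟨vol_ne_top _, ENNReal.ofReal_ne_top⟩
        · exact le_trans (measure_mono hsub) (measure_union_le _ _)
    _ = xiMeas h τ (h i + τ i) + τ (i+1) := by
        rw [ENNReal.toReal_add (vol_ne_top _) (by rw [Real.volume_Ico]; exact ENNReal.ofReal_ne_top)]
        rw [Real.volume_Ico]
        congr 1
        rw [ENNReal.toReal_ofReal (by linarith)]
        ring

/-- gap bound: for `i ≥ 2` the interval `(h₁+τ₁, h₂)` is attack-free. -/
lemma xiMeas_gap (hξ : IsDoS h τ) {i : ℕ} (hi : 2 ≤ i) :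
    xiMeas h τ (h i + τ i) ≤ (h i + τ i) - (h 2 - (h 1 + τ 1)) := by
  set T := h i + τ i with hT
  have hg : h 1 + τ 1 < h 2 := hξ.2.2 1 le_rfl
  have h2T : h 2 ≤ T := le_trans (h_le hξ (by omega) hi) (by have := hξ.2.1 i (by omega); linarith)
  have h10 : 0 ≤ h 1 + τ 1 := T_nonneg hξ le_rfl
  have hdisj : Disjoint (DoSUnion h τ ∩ Set.Icc 0 T) (Set.Ioo (h 1 + τ 1) (h 2)) := by
    rw [Set.disjoint_left]
    rintro x ⟨hxU, -⟩ ⟨hx1, hx2⟩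
    simp only [DoSUnion, Set.mem_iUnion, Set.mem_Ici] at hxU
    obtain ⟨n, hn1, hxn⟩ := hxU
    rcases Nat.lt_or_ge n 2 with hn2 | hn2
    · have : n = 1 := by omega
      subst this
      exact absurd hxn.2 (by linarith)
    · have : h 2 ≤ h n := h_le hξ (by omega) hn2
      have := hxn.1
      linarith
  have hunion : volume (DoSUnion h τ ∩ Set.Icc 0 T) + volume (Set.Ioo (h 1 + τ 1) (h 2))
      ≤ volume (Set.Icc 0 T) := by
    rw [← measure_union hdisj measurableSet_Ioo]
    apply measure_mono
    apply Set.union_subset Set.inter_subset_right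
    intro x ⟨hx1, hx2⟩
    exact ⟨by linarith, by linarith⟩
  rw [Real.volume_Ioo, Real.volume_Icc] at hunion
  have hfin := vol_ne_top (h := h) (τ := τ) T
  have hmt : (volume (DoSUnion h τ ∩ Set.Icc 0 T) + ENNReal.ofReal (h 2 - (h 1 + τ 1))).toReal
      ≤ (ENNReal.ofReal (T - 0)).toReal :=
    ENNReal.toReal_mono ENNReal.ofReal_ne_top hunion
  rw [ENNReal.toReal_add hfin ENNReal.ofReal_ne_top, ENNReal.toReal_ofReal (by linarith),
    ENNReal.toReal_ofReal (by linarith)] at hmt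
  unfold xiMeas
  linarith


lemma nXi_eq (hξ : IsDoS h τ) {i : ℕ} (hi : 1 ≤ i) {t : ℝ}
    (h1 : h i ≤ t) (h2 : t < h (i + 1)) : nXi h t = i := by
  have hset : {x : ℝ | ∃ n : ℕ, 1 ≤ n ∧ h n = x} ∩ Set.Icc 0 t = h '' (Set.Icc 1 i) := by
    ext x
    constructor
    · rintro ⟨⟨n, hn1, rfl⟩, hx0, hxt⟩
      refine ⟨n, ⟨hn1, ?_⟩, rfl⟩
      by_contra hni
      have hin : i + 1 ≤ n := by omega
      have : h (i+1) ≤ h n := h_le hξ (by omega) hin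
      linarith
    · rintro ⟨n, ⟨hn1, hni⟩, rfl⟩
      exact ⟨⟨n, hn1, rfl⟩, h_nonneg hξ hn1, le_trans (h_le hξ hn1 hni) h1⟩
  rw [nXi, hset, Set.ncard_image_of_injOn, ← Finset.coe_Icc, Set.ncard_coe_finset,
    Nat.card_Icc]
  · omega
  · rintro a ⟨ha, -⟩ b ⟨hb, -⟩ hab
    by_contra hne
    rcases Nat.lt_or_ge a b with hlt | hgt
    · exact absurd hab (ne_of_lt (h_lt hξ ha hlt))
    · exact absurd hab.symm (ne_of_lt (h_lt hξ hb (by omega)))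

lemma nXi_le (hξ : IsDoS h τ) {l : ℕ} (hl : 2 ≤ l) {t : ℝ} (ht : t < h l) :
    (nXi h t : ℝ) ≤ l := by
  have hsub : {x : ℝ | ∃ n : ℕ, 1 ≤ n ∧ h n = x} ∩ Set.Icc 0 t ⊆ h '' (Set.Icc 1 (l-1)) := by
    rintro x ⟨⟨n, hn1, rfl⟩, -, hxt⟩
    refine ⟨n, ⟨hn1, ?_⟩, rfl⟩
    by_contra hni
    have hln : l ≤ n := by omega
    have : h l ≤ h n := h_le hξ (by omega) hln
    linarith
  have h1 : nXi h t ≤ (h '' (Set.Icc 1 (l-1))).ncard :=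
    Set.ncard_le_ncard hsub ((Set.finite_Icc 1 (l-1)).image h)
  have h2 : (h '' (Set.Icc 1 (l-1))).ncard ≤ (Set.Icc 1 (l-1) : Set ℕ).ncard :=
    Set.ncard_image_le (Set.finite_Icc _ _)
  have h3 : (Set.Icc 1 (l-1) : Set ℕ).ncard = l - 1 - 1 + 1 := by
    rw [← Finset.coe_Icc, Set.ncard_coe_finset, Nat.card_Icc]
    omega
  have : nXi h t ≤ l := by omega
  exact_mod_cast this

lemma exists_window (u : ℕ → ℝ) (i₀ : ℕ) (x : ℝ) (hx : u i₀ ≤ x)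
    (htop : ∃ m : ℕ, x < u (i₀ + m + 1)) :
    ∃ n, i₀ ≤ n ∧ u n ≤ x ∧ x < u (n + 1) := by
  classical
  set m₀ := Nat.find htop with hm₀
  refine ⟨i₀ + m₀, by omega, ?_, ?_⟩
  · rcases Nat.eq_zero_or_pos m₀ with h0 | hpos
    · rw [h0]; simpa using hx
    · have hmin := Nat.find_min htop (m := m₀ - 1) (by omega)
      push_neg at hmin
      have heq : i₀ + (m₀ - 1) + 1 = i₀ + m₀ := by omega
      rwa [heq] at hmin
  · have hspec := Nat.find_spec htop
    rwa [show i₀ + m₀ + 1 = (i₀ + m₀) + 1 by omega] at hspec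

lemma h_unbounded (hξ : IsDoS h τ) {Bf Λ : ℝ} (hBf : 0 ≤ Bf) (hΛ : 0 < Λ)
    (hbound : ∀ t ≥ (0:ℝ), (nXi h t : ℝ) ≤ Λ + Bf * t) (M : ℝ) :
    ∃ n, 1 ≤ n ∧ M < h n := by
  by_contra hcon
  push_neg at hcon
  set i := max 1 (Nat.ceil (Λ + Bf * M) + 1) with hi
  have hi1 : 1 ≤ i := le_max_left _ _
  have hhi : h i ≤ M := hcon i hi1
  have hcount : nXi h (h i) = i := nXi_eq hξ hi1 le_rfl (h_lt hξ hi1 (by omega))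
  have hb := hbound (h i) (h_nonneg hξ hi1)
  rw [hcount] at hb
  have h1 : (i : ℝ) ≤ Λ + Bf * M := by nlinarith
  have h2 : Nat.ceil (Λ + Bf * M) + 1 ≤ i := le_max_right _ _
  have h3 : (Λ + Bf * M) ≤ (Nat.ceil (Λ + Bf * M) : ℝ) := Nat.le_ceil _
  have h4 : ((Nat.ceil (Λ + Bf * M) + 1 : ℕ) : ℝ) ≤ (i : ℝ) := by exact_mod_cast h2
  push_cast at h4
  linarith

end L6

set_option maxHeartbeats 2000000 in
/-- Lemma 6: properties of the adaptive impulsive control intervals generated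
by (22)–(23). -/
theorem adaptive_impulsive_intervals (h τ : ℕ → ℝ) (hξ : IsDoS h τ)
    (hA1 : Assumption1 h τ) (l : ℕ) (hl : 2 ≤ l) (ε₀ θ : ℝ)
    (hε₀ : 0 < ε₀ ∧ ε₀ < 1) (hθ : 0 < θ ∧ θ < 1) (Bd Bf : ℝ → ℝ)
    (hBd : IsDurEstimator h τ l ε₀ θ Bd) (hBf : IsFreqEstimator h l ε₀ θ Bf)
    (μ β γ₃ : ℝ) (hμ : 0 < μ ∧ μ < 1) (hβ : 0 < β) (hγ₃ : 1 < γ₃)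
    (Δ₀ : ℝ) (hΔ₀ : Δ₀ = -(Real.log μ) / (γ₃ * β))
    (tk Δ : ℕ → ℝ) (ht1 : tk 1 = 0)
    (hrec : ∀ k, 1 ≤ k → tk (k + 1) = tk k + Δ k)
    (hinit : ∀ k, 1 ≤ k → 0 ≤ tk k → tk k < h 1 + τ 1 → Δ k = Δ₀)
    (hupd : ∀ k, 1 ≤ k → ∀ n, 1 ≤ n → h n + τ n ≤ tk k →
      tk k < h (n + 1) + τ (n + 1) →
      Δ k = Real.log μ * (1 - Bd (h n + τ n))
        / (γ₃ * (Bf (h n) * Real.log μ - β))) :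
    (∀ k, 1 ≤ k → Δ k ≤ Δ₀) ∧
    (∃ Δlow > (0 : ℝ), ∀ k, 1 ≤ k → Δlow ≤ Δ k) ∧
    (∃ tcheck ≥ (0 : ℝ), ∃ Δbar > (0 : ℝ),
      ∃ B_d ∈ durBounds h τ, ∃ B_f ∈ freqBounds h,
        Δbar * (β - B_f * Real.log μ) < -(Real.log μ) * (1 - B_d) ∧
        ∀ k, 1 ≤ k → tcheck ≤ tk k → Δ k ≤ Δbar) := by
  classical
  obtain ⟨hε₀pos, hε₀lt⟩ := hε₀
  obtain ⟨hθpos, hθlt⟩ := hθ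
  obtain ⟨hinfD, hFne, Γ, hΓpos, hΓ⟩ := hA1
  obtain ⟨Bf0, hBf00, Λ0, hΛ0pos, hΛ0⟩ := hFne
  set χ := Real.log μ with hχdef
  have hχ : χ < 0 := Real.log_neg hμ.1 hμ.2
  have hnχ : 0 < -χ := by linarith
  have hγ₃pos : (0:ℝ) < γ₃ := by linarith
  -- a duration bound strictly below 1
  have hone : (1:ℝ) ∈ durBounds h τ := by
    refine ⟨zero_le_one, le_rfl, 1, one_pos, fun t ht => ?_⟩
    have := L6.xiMeas_le_self (h := h) (τ := τ) ht
    linarith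
  obtain ⟨B₁, hB₁mem, hB₁lt⟩ := exists_lt_of_csInf_lt ⟨1, hone⟩ hinfD
  obtain ⟨hB₁0, hB₁le, κ₁, hκ₁pos, hκ₁⟩ := hB₁mem
  -- basic positivity
  have hl1 : 1 ≤ l := by omega
  have hT1nn : 0 ≤ h 1 + τ 1 := L6.T_nonneg hξ le_rfl
  have hhl : 0 < h l := L6.h_pos hξ hl
  have hTl : 0 < h l + τ l := L6.T_pos hξ hl
  -- unboundedness and window lemmas
  have hhub : ∀ M : ℝ, ∃ n, 1 ≤ n ∧ M < h n :=
    L6.h_unbounded hξ hBf00 hΛ0pos hΛ0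
  have hwinT : ∀ i₀, 1 ≤ i₀ → ∀ x : ℝ, h i₀ + τ i₀ ≤ x →
      ∃ n, i₀ ≤ n ∧ h n + τ n ≤ x ∧ x < h (n+1) + τ (n+1) := by
    intro i₀ hi₀ x hx
    refine L6.exists_window (fun n => h n + τ n) i₀ x hx ?_
    obtain ⟨m, hm1, hmx⟩ := hhub x
    refine ⟨m, ?_⟩
    have h1 : h m ≤ h (i₀ + m + 1) := L6.h_le hξ hm1 (by omega)
    have h2 := hξ.2.1 (i₀ + m + 1) (by omega)
    linarith
  have hwinH : ∀ i₀, 1 ≤ i₀ → ∀ x : ℝ, h i₀ ≤ x →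
      ∃ n, i₀ ≤ n ∧ h n ≤ x ∧ x < h (n+1) := by
    intro i₀ hi₀ x hx
    refine L6.exists_window h i₀ x hx ?_
    obtain ⟨m, hm1, hmx⟩ := hhub x
    exact ⟨m, lt_of_lt_of_le hmx (L6.h_le hξ hm1 (by omega))⟩
  -- uniform bound on the duration ratios
  have hg : 0 < h 2 - (h 1 + τ 1) := by have := hξ.2.2 1 le_rfl; linarith
  set g := h 2 - (h 1 + τ 1) with hgdef
  set T₀ : ℝ := max (h l + τ l) (2 * κ₁ / (1 - B₁)) with hT₀def
  have hT₀pos : 0 < T₀ := lt_of_lt_of_le hTl (le_max_left _ _)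
  set rmax : ℝ := max (1 - g / T₀) ((1 + B₁) / 2) with hrmaxdef
  have hrmax1 : rmax < 1 := by
    apply max_lt
    · have : 0 < g / T₀ := div_pos hg hT₀pos
      linarith
    · linarith
  have hrmax0 : 0 ≤ rmax := le_trans (by linarith) (le_max_right _ _)
  have hrbound : ∀ i, l ≤ i → xiMeas h τ (h i + τ i) / (h i + τ i) ≤ rmax := by
    intro i hi
    have hi2 : 2 ≤ i := le_trans hl hi
    have hTi : 0 < h i + τ i := L6.T_pos hξ hi2
    rcases le_or_gt (h i + τ i) T₀ with hc | hc
    · refine le_trans ?_ (le_max_left _ _)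
      rw [div_le_iff₀ hTi]
      have hgap := L6.xiMeas_gap hξ hi2
      have e : (1 - g / T₀) * (h i + τ i) - ((h i + τ i) - g) = g * (T₀ - (h i + τ i)) / T₀ := by
        field_simp
        ring
      have : 0 ≤ g * (T₀ - (h i + τ i)) / T₀ :=
        div_nonneg (mul_nonneg hg.le (by linarith)) hT₀pos.le
      linarith
    · refine le_trans ?_ (le_max_right _ _)
      rw [div_le_iff₀ hTi]
      have hb := hκ₁ (h i + τ i) hTi.le
      have hT₀2 : 2 * κ₁ / (1 - B₁) ≤ h i + τ i := le_trans (le_max_right _ _) hc.le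
      have h1B : 0 < 1 - B₁ := by linarith
      rw [div_le_iff₀ h1B] at hT₀2
      nlinarith
  -- uniform bound on the frequency ratios
  set fmax : ℝ := Λ0 / h l + Bf0 with hfmaxdef
  have hfbound : ∀ i, l ≤ i → (i : ℝ) / h i ≤ fmax := by
    intro i hi
    have hi1 : 1 ≤ i := le_trans hl1 hi
    have hhi : 0 < h i := lt_of_lt_of_le hhl (L6.h_le hξ (by omega) hi)
    have hcount : nXi h (h i) = i := L6.nXi_eq hξ hi1 le_rfl (L6.h_lt hξ hi1 (by omega))
    have hb := hΛ0 (h i) hhi.le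
    rw [hcount] at hb
    have hlhi : h l ≤ h i := L6.h_le hξ (by omega) hi
    have h5 : (i:ℝ)/h i ≤ (Λ0 + Bf0 * h i) / h i := by
      exact (div_le_div_iff_of_pos_right hhi).mpr hb
    have h6 : (Λ0 + Bf0 * h i) / h i = Λ0 / h i + Bf0 := by
      field_simp
    have h7 : Λ0 / h i ≤ Λ0 / h l := div_le_div_of_nonneg_left hΛ0pos.le hhl hlhi
    rw [hfmaxdef]
    linarith [h5, h6 ▸ h5]
  -- estimator values
  set A : ℕ → ℝ := fun n => Bd (h n + τ n) with hAdef
  set Bv : ℕ → ℝ := fun n => Bf (h n) with hBvdef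
  have hAval : ∀ n, ∀ hn : l ≤ n, A n = (Finset.Icc l n).sup'
      (Finset.nonempty_Icc.mpr hn)
      (fun i => max ε₀ (θ * (xiMeas h τ (h i + τ i) / (h i + τ i)) + (1 - θ))) := by
    intro n hn
    exact hBd.2 n hn (h n + τ n) le_rfl (L6.T_lt hξ (le_trans hl1 hn) (by omega))
  have hBval : ∀ n, ∀ hn : l ≤ n, Bv n = (Finset.Icc l n).sup'
      (Finset.nonempty_Icc.mpr hn) (fun i => max ε₀ (((i : ℝ) / h i) / θ)) := by
    intro n hn
    exact hBf.2 n hn (h n) le_rfl (L6.h_lt hξ (le_trans hl1 hn) (by omega))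
  have hAsmall : ∀ n, 1 ≤ n → n < l → A n = ε₀ := by
    intro n hn1 hnl
    exact hBd.1 _ (L6.T_nonneg hξ hn1) (L6.T_lt hξ hn1 hnl)
  have hBsmall : ∀ n, 1 ≤ n → n < l → Bv n = ε₀ := by
    intro n hn1 hnl
    exact hBf.1 _ (L6.h_nonneg hξ hn1) (L6.h_lt hξ hn1 hnl)
  set amax : ℝ := max ε₀ (θ * rmax + (1 - θ)) with hamaxdef
  set bmax : ℝ := max ε₀ (fmax / θ) with hbmaxdef
  have hamax1 : amax < 1 := by
    apply max_lt hε₀lt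
    nlinarith
  have hamax0 : ε₀ ≤ amax := le_max_left _ _
  have hbmax0 : ε₀ ≤ bmax := le_max_left _ _
  have hAub : ∀ n, l ≤ n → A n ≤ amax := by
    intro n hn
    rw [hAval n hn]
    apply Finset.sup'_le
    intro i hi
    rw [Finset.mem_Icc] at hi
    apply max_le (le_max_left _ _)
    refine le_trans ?_ (le_max_right _ _)
    have := hrbound i hi.1
    nlinarith
  have hBub : ∀ n, l ≤ n → Bv n ≤ bmax := by
    intro n hn
    rw [hBval n hn]
    apply Finset.sup'_le
    intro i hi
    rw [Finset.mem_Icc] at hi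
    apply max_le (le_max_left _ _)
    refine le_trans ?_ (le_max_right _ _)
    have := hfbound i hi.1
    exact (div_le_div_iff_of_pos_right hθpos).mpr this
  have hAlb : ∀ n, l ≤ n → ε₀ ≤ A n := by
    intro n hn
    rw [hAval n hn]
    have hm := Finset.le_sup'
      (fun i => max ε₀ (θ * (xiMeas h τ (h i + τ i) / (h i + τ i)) + (1 - θ)))
      (Finset.mem_Icc.mpr ⟨le_rfl, hn⟩)
    exact le_trans (le_max_left _ _) hm
  have hBlb : ∀ n, l ≤ n → ε₀ ≤ Bv n := by
    intro n hn
    rw [hBval n hn]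
    have hm := Finset.le_sup' (fun i : ℕ => max ε₀ (((i : ℝ) / h i) / θ))
      (Finset.mem_Icc.mpr ⟨le_rfl, hn⟩)
    exact le_trans (le_max_left _ _) hm
  have hArange : ∀ n, 1 ≤ n → ε₀ ≤ A n ∧ A n ≤ amax := by
    intro n hn
    rcases lt_or_ge n l with hnl | hnl
    · rw [hAsmall n hn hnl]; exact ⟨le_rfl, hamax0⟩
    · exact ⟨hAlb n hnl, hAub n hnl⟩
  have hBrange : ∀ n, 1 ≤ n → ε₀ ≤ Bv n ∧ Bv n ≤ bmax := by
    intro n hn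
    rcases lt_or_ge n l with hnl | hnl
    · rw [hBsmall n hn hnl]; exact ⟨le_rfl, hbmax0⟩
    · exact ⟨hBlb n hnl, hBub n hnl⟩
  have hAmono : ∀ m n, l ≤ m → m ≤ n → A m ≤ A n := by
    intro m n hm hmn
    rw [hAval m hm, hAval n (hm.trans hmn)]
    exact Finset.sup'_mono _ (Finset.Icc_subset_Icc_right hmn) _
  have hBmono : ∀ m n, l ≤ m → m ≤ n → Bv m ≤ Bv n := by
    intro m n hm hmn
    rw [hBval m hm, hBval n (hm.trans hmn)]
    exact Finset.sup'_mono _ (Finset.Icc_subset_Icc_right hmn) _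
  -- the interval-length function
  set F : ℝ → ℝ → ℝ := fun a b => (-χ) * (1 - a) / (γ₃ * (β - b * χ)) with hFdef
  have hDpos : ∀ b : ℝ, 0 ≤ b → 0 < γ₃ * (β - b * χ) := by
    intro b hb
    have : 0 ≤ b * (-χ) := mul_nonneg hb hnχ.le
    apply mul_pos hγ₃pos
    nlinarith
  have hFmono : ∀ a a' b b' : ℝ, a ≤ a' → a' ≤ 1 → 0 ≤ b → b ≤ b' →
      F a' b' ≤ F a b := by
    intro a a' b b' haa ha1 hb hbb
    apply div_le_div₀ (by nlinarith) (by nlinarith) (hDpos b hb)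
    have : 0 ≤ b' * (-χ) - b * (-χ) := by nlinarith
    nlinarith
  have hFpos : ∀ a b : ℝ, a < 1 → 0 ≤ b → 0 < F a b := by
    intro a b ha hb
    exact div_pos (by nlinarith) (hDpos b hb)
  have hΔeq : ∀ a b : ℝ, χ * (1 - a) / (γ₃ * (b * χ - β)) = F a b := by
    intro a b
    rw [hFdef]
    rw [show χ * (1 - a) = -((-χ) * (1 - a)) by ring,
      show γ₃ * (b * χ - β) = -(γ₃ * (β - b * χ)) by ring, neg_div_neg_eq]
  have hΔ₀F : Δ₀ = F 0 0 := by
    rw [hΔ₀, hFdef]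
    norm_num
  -- case analysis for Δ k
  have hcases : ∀ k, 1 ≤ k → 0 ≤ tk k →
      Δ k = F 0 0 ∨ ∃ n, 1 ≤ n ∧ Δ k = F (A n) (Bv n) := by
    intro k hk htk
    rcases lt_or_ge (tk k) (h 1 + τ 1) with hc | hc
    · left
      rw [hinit k hk htk hc, hΔ₀F]
    · right
      obtain ⟨n, hn1, hn2, hn3⟩ := hwinT 1 le_rfl (tk k) hc
      refine ⟨n, hn1, ?_⟩
      rw [hupd k hk n hn1 hn2 hn3, hΔeq]
  set Δlow : ℝ := F amax bmax with hΔlowdef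
  have hΔlowpos : 0 < Δlow := hFpos amax bmax hamax1 (by linarith)
  have hbounds : ∀ k, 1 ≤ k → 0 ≤ tk k → Δlow ≤ Δ k ∧ Δ k ≤ Δ₀ := by
    intro k hk htk
    rcases hcases k hk htk with hc | ⟨n, hn1, hc⟩
    · rw [hc, ← hΔ₀F]
      constructor
      · rw [hΔ₀F]
        exact hFmono 0 amax 0 bmax (by linarith) hamax1.le le_rfl (by linarith)
      · exact le_rfl
    · obtain ⟨hAl, hAu⟩ := hArange n hn1
      obtain ⟨hBl, hBu⟩ := hBrange n hn1
      rw [hc, hΔ₀F]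
      constructor
      · exact hFmono (A n) amax (Bv n) bmax hAu hamax1.le (by linarith) hBu
      · exact hFmono 0 (A n) 0 (Bv n) (by linarith) (by linarith) le_rfl (by linarith)
  have htknn : ∀ k, 1 ≤ k → 0 ≤ tk k := by
    intro k hk
    induction k with
    | zero => omega
    | succ n ih =>
      rcases Nat.lt_or_ge 1 (n + 1) with h1 | h1
      · have hn1 : 1 ≤ n := by omega
        have htn := ih hn1
        have := (hbounds n hn1 htn).1
        rw [hrec n hn1]
        linarith
      · have : n + 1 = 1 := by omega
        rw [this, ht1]
  refine ⟨fun k hk => (hbounds k hk (htknn k hk)).2,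
    ⟨Δlow, hΔlowpos, fun k hk => (hbounds k hk (htknn k hk)).1⟩, ?_⟩
  -- Part 3
  set Rr : ℕ → ℝ := fun j => xiMeas h τ (h (j+l) + τ (j+l)) / (h (j+l) + τ (j+l)) with hRrdef
  set Ff : ℕ → ℝ := fun j => ((j+l : ℕ) : ℝ) / h (j+l) with hFfdef
  have hRub : ∀ j, Rr j ≤ rmax := fun j => hrbound (j+l) (by omega)
  have hRnn : ∀ j, 0 ≤ Rr j := fun j =>
    div_nonneg (L6.xiMeas_nonneg _) (L6.T_pos hξ (by omega)).le
  have hFub : ∀ j, Ff j ≤ fmax := fun j => hfbound (j+l) (by omega)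
  have hFnn : ∀ j, 0 ≤ Ff j := fun j =>
    div_nonneg (Nat.cast_nonneg _) (L6.h_pos hξ (by omega)).le
  set sv := ⨆ j, Rr j with hsvdef
  set φ := ⨆ j, Ff j with hφdef
  have hRbdd : BddAbove (Set.range Rr) := ⟨rmax, by rintro x ⟨j, rfl⟩; exact hRub j⟩
  have hFbdd : BddAbove (Set.range Ff) := ⟨fmax, by rintro x ⟨j, rfl⟩; exact hFub j⟩
  have hs0 : 0 ≤ sv := le_trans (hRnn 0) (le_ciSup hRbdd 0)
  have hsle : sv ≤ rmax := ciSup_le hRub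
  have hs1 : sv < 1 := lt_of_le_of_lt hsle hrmax1
  have hφ0 : 0 ≤ φ := le_trans (hFnn 0) (le_ciSup hFbdd 0)
  -- sv is a duration bound
  have hsdur : sv ∈ durBounds h τ := by
    refine ⟨hs0, hs1.le, (h l + τ l) + Γ, by linarith, ?_⟩
    intro t ht
    rcases lt_or_ge t (h l + τ l) with hc | hc
    · have h1 := L6.xiMeas_le_self (h := h) (τ := τ) ht
      have h2 : 0 ≤ sv * t := mul_nonneg hs0 ht
      linarith
    · obtain ⟨n, hnl, hn1, hn2⟩ := hwinT l (by omega) t hc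
      have hn2' : 2 ≤ n := le_trans hl hnl
      have hTn : 0 < h n + τ n := L6.T_pos hξ hn2'
      have hinc := L6.xiMeas_incr hξ (by omega) hn1 hn2
      have hR : xiMeas h τ (h n + τ n) = Rr (n - l) * (h n + τ n) := by
        simp only [hRrdef]
        rw [show n - l + l = n by omega]
        field_simp
      have hRs : Rr (n - l) ≤ sv := le_ciSup hRbdd (n - l)
      have hτn : τ (n+1) ≤ Γ := hΓ (n+1) (by omega)
      have hle1 : xiMeas h τ (h n + τ n) ≤ sv * (h n + τ n) := by
        rw [hR]
        exact mul_le_mul_of_nonneg_right hRs hTn.le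
      have hst : sv * (h n + τ n) ≤ sv * t := mul_le_mul_of_nonneg_left hn1 hs0
      have hTlnn : (0:ℝ) ≤ h l + τ l := hTl.le
      linarith
  -- φ is a frequency bound
  have hφfreq : φ ∈ freqBounds h := by
    refine ⟨hφ0, (l : ℝ) + 1, by positivity, ?_⟩
    intro t ht
    rcases lt_or_ge t (h l) with hc | hc
    · have h1 := L6.nXi_le hξ hl hc
      have h2 : 0 ≤ φ * t := mul_nonneg hφ0 ht
      linarith
    · obtain ⟨n, hnl, hn1, hn2⟩ := hwinH l (by omega) t hc
      have hhn : 0 < h n := lt_of_lt_of_le hhl (L6.h_le hξ (by omega) hnl)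
      have hcount : nXi h t = n := L6.nXi_eq hξ (by omega) hn1 hn2
      have hFn : ((n:ℝ)) = Ff (n - l) * h n := by
        simp only [hFfdef]
        rw [show n - l + l = n by omega]
        field_simp
      have hFs : Ff (n - l) ≤ φ := le_ciSup hFbdd (n - l)
      rw [hcount, hFn]
      have h3 : Ff (n-l) * h n ≤ φ * h n := mul_le_mul_of_nonneg_right hFs hhn.le
      have h4 : φ * h n ≤ φ * t := mul_le_mul_of_nonneg_left hn1 hφ0
      linarith
  -- suprema of the estimator sequences
  set ainf := ⨆ j, A (j+l) with hainf
  set binf := ⨆ j, Bv (j+l) with hbinf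
  have hAbdd : BddAbove (Set.range fun j => A (j+l)) :=
    ⟨amax, by rintro x ⟨j, rfl⟩; exact hAub (j+l) (by omega)⟩
  have hBbdd : BddAbove (Set.range fun j => Bv (j+l)) :=
    ⟨bmax, by rintro x ⟨j, rfl⟩; exact hBub (j+l) (by omega)⟩
  have haub : ainf ≤ amax := ciSup_le (fun j => hAub (j+l) (by omega))
  have ha1 : ainf < 1 := lt_of_le_of_lt haub hamax1
  have hb0 : (0:ℝ) ≤ binf :=
    le_trans (le_trans hε₀pos.le (hBlb (0+l) (by omega))) (le_ciSup hBbdd 0)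
  have hAR : ∀ j, θ * Rr j + (1 - θ) ≤ A (j + l) := by
    intro j
    rw [hAval (j+l) (by omega)]
    have hm := Finset.le_sup'
      (fun i => max ε₀ (θ * (xiMeas h τ (h i + τ i) / (h i + τ i)) + (1 - θ)))
      (Finset.mem_Icc.mpr ⟨(by omega : l ≤ j + l), le_rfl⟩)
    refine le_trans ?_ hm
    simp only [hRrdef]
    exact le_max_right _ _
  have hBFf : ∀ j, Ff j / θ ≤ Bv (j + l) := by
    intro j
    rw [hBval (j+l) (by omega)]
    have hm := Finset.le_sup' (fun i : ℕ => max ε₀ (((i : ℝ) / h i) / θ))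
      (Finset.mem_Icc.mpr ⟨(by omega : l ≤ j + l), le_rfl⟩)
    refine le_trans ?_ hm
    simp only [hFfdef]
    exact le_max_right _ _
  have hsa : θ * sv + (1 - θ) ≤ ainf := by
    have hle : sv ≤ (ainf - (1 - θ)) / θ := by
      apply ciSup_le
      intro j
      rw [le_div_iff₀ hθpos]
      have h1 := hAR j
      have h2 : A (j+l) ≤ ainf := le_ciSup hAbdd j
      linarith
    rw [le_div_iff₀ hθpos] at hle
    linarith
  have hφb : φ ≤ θ * binf := by
    apply ciSup_le
    intro j
    have h1 := hBFf j
    have h2 : Bv (j+l) ≤ binf := le_ciSup hBbdd j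
    have h3 : Ff j / θ ≤ binf := le_trans h1 h2
    rw [div_le_iff₀ hθpos] at h3
    linarith
  have hβφ : 0 < β - φ * χ := by
    linarith only [hβ, mul_nonneg hφ0 hnχ.le]
  have hkey : (1 - ainf) * (β - φ * χ) < γ₃ * (1 - sv) * (β - binf * χ) := by
    have h1 : 1 - ainf ≤ θ * (1 - sv) := by linarith
    have h2 : (1 - ainf) * (β - φ*χ) ≤ θ * (1 - sv) * (β - φ*χ) :=
      mul_le_mul_of_nonneg_right h1 hβφ.le
    have h3 : θ * φ ≤ γ₃ * binf := by
      linarith only [hφb, mul_nonneg (by linarith only [hθlt] : (0:ℝ) ≤ 1-θ) hφ0,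
        mul_nonneg (by linarith only [hγ₃] : (0:ℝ) ≤ γ₃-1) hb0,
        mul_nonneg (by linarith only [hθlt] : (0:ℝ) ≤ 1-θ) hb0]
    have h1s : 0 < 1 - sv := by linarith only [hs1]
    have h4 : θ*(1-sv)*(φ*(-χ)) ≤ γ₃*(1-sv)*(binf*(-χ)) := by
      have hmm := mul_le_mul_of_nonneg_left h3 (mul_nonneg h1s.le hnχ.le)
      linarith only [hmm]
    have h5 : θ*(1-sv)*β < γ₃*(1-sv)*β := by
      have hθγ : θ*(1-sv) < γ₃*(1-sv) :=
        mul_lt_mul_of_pos_right (by linarith only [hθlt, hγ₃]) h1s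
      have := mul_lt_mul_of_pos_right hθγ hβ
      linarith only [this]
    linarith only [h2, h4, h5]
  have hAt : Filter.Tendsto (fun j => A (j + l)) Filter.atTop (nhds ainf) :=
    tendsto_atTop_ciSup (fun i j hij => hAmono (i+l) (j+l) (by omega) (by omega)) hAbdd
  have hBt : Filter.Tendsto (fun j => Bv (j + l)) Filter.atTop (nhds binf) :=
    tendsto_atTop_ciSup (fun i j hij => hBmono (i+l) (j+l) (by omega) (by omega)) hBbdd
  have hLt : Filter.Tendsto (fun j => (1 - A (j+l)) * (β - φ*χ)) Filter.atTop
      (nhds ((1 - ainf) * (β - φ*χ))) :=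
    (tendsto_const_nhds.sub hAt).mul tendsto_const_nhds
  have hRt : Filter.Tendsto (fun j => γ₃ * (1 - sv) * (β - Bv (j+l) * χ)) Filter.atTop
      (nhds (γ₃ * (1 - sv) * (β - binf * χ))) :=
    (tendsto_const_nhds.sub (hBt.mul tendsto_const_nhds)).const_mul _
  obtain ⟨j₀, hj₀⟩ := (hLt.eventually_lt hRt hkey).exists
  set n₀ := j₀ + l with hn₀def
  have hn₀l : l ≤ n₀ := by omega
  have hn₀1 : 1 ≤ n₀ := by omega
  have hBvn₀ : (0:ℝ) ≤ Bv n₀ := le_trans hε₀pos.le (hBlb n₀ hn₀l)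
  refine ⟨h n₀ + τ n₀, L6.T_nonneg hξ hn₀1, F (A n₀) (Bv n₀),
    hFpos _ _ (lt_of_le_of_lt (hAub n₀ hn₀l) hamax1) hBvn₀, sv, hsdur, φ, hφfreq, ?_, ?_⟩
  · have hD := hDpos (Bv n₀) hBvn₀
    rw [hFdef]
    simp only []
    rw [div_mul_eq_mul_div, div_lt_iff₀ hD]
    have hmul := mul_lt_mul_of_pos_left hj₀ hnχ
    linarith only [hmul]
  · intro k hk htk
    have htk1 : h 1 + τ 1 ≤ tk k := le_trans (L6.T_le hξ le_rfl hn₀1) htk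
    obtain ⟨n, hn1, hn2, hn3⟩ := hwinT 1 le_rfl (tk k) htk1
    have hnn₀ : n₀ ≤ n := by
      by_contra hcon
      push_neg at hcon
      have : h (n+1) + τ (n+1) ≤ h n₀ + τ n₀ := L6.T_le hξ (by omega) (by omega)
      linarith
    have hnl : l ≤ n := le_trans hn₀l hnn₀
    rw [hupd k hk n hn1 hn2 hn3, hΔeq]
    exact hFmono (A n₀) (A n) (Bv n₀) (Bv n) (hAmono n₀ n hn₀l hnn₀)
      (lt_of_le_of_lt (hAub n hnl) hamax1).le hBvn₀ (hBmono n₀ n hn₀l hnn₀)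
end

section
/- (Counterexample showing θ = 1 fails, Example 4 / Remark 4.) Let ξ be the DoS sequence with h_n = 2n+1 and τ_n = 1 for all n ≥ 1, i.e., H_n = [2n+1, 2n+2). Then: (i) inf D(ξ) = 1/2; (ii) inf F(ξ) = 1/2; and (iii) for every i ≥ 1, |Ξ(0, h_i + τ_i)| / (h_i + τ_i) = i/(2i+2) < 1/2. Consequently, sup_{i≥1} |Ξ(0, h_i+τ_i)|/(h_i+τ_i) ≤ 1/2 while every duration-bound of ξ is ≥ 1/2. -/
open MeasureTheory Filter Set

/-- The DoS sequence of Example 4 / Remark 4: `h n = 2n + 1`, `τ n = 1`, i.e.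
`H n = [2n+1, 2n+2)`. -/
noncomputable def hEx : ℕ → ℝ := fun n => 2 * n + 1

/-- Its interval lengths. -/
noncomputable def τEx : ℕ → ℝ := fun _ => 1

/-! ### Auxiliary lemmas -/

lemma vol_finU (K : ℕ) :
    volume (⋃ n ∈ Finset.Icc 1 K, Ico ((2*n+1:ℝ)) (2*n+2)) = K := by
  rw [measure_biUnion_finset]
  · simp only [Real.volume_Ico]
    have : ∀ n ∈ Finset.Icc 1 K, ENNReal.ofReal ((2*(n:ℝ)+2) - (2*n+1)) = 1 := by
      intro n _; norm_num
    rw [Finset.sum_congr rfl this]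
    simp [Nat.card_Icc]
  · intro i hi j hj hij
    rcases lt_or_gt_of_ne hij with h | h
    · apply Set.Ico_disjoint_Ico.mpr
      have : (2*(i:ℝ)+2) ≤ 2*j+1 := by
        have : (i:ℝ) + 1 ≤ j := by exact_mod_cast h
        linarith
      exact le_trans (min_le_left _ _) (le_trans this (le_max_right _ _))
    · apply Set.Ico_disjoint_Ico.mpr
      have : (2*(j:ℝ)+2) ≤ 2*i+1 := by
        have : (j:ℝ) + 1 ≤ i := by exact_mod_cast h
        linarith
      exact le_trans (min_le_right _ _) (le_trans this (le_max_left _ _))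
  · intro n _; exact measurableSet_Ico

lemma mem_DoS {x : ℝ} : x ∈ DoSUnion hEx τEx ↔ ∃ n : ℕ, 1 ≤ n ∧ 2*n+1 ≤ x ∧ x < 2*n+2 := by
  simp only [DoSUnion, hEx, τEx, Set.mem_iUnion, Set.mem_Ico, Set.mem_Ici]
  constructor
  · rintro ⟨n, hn, h1, h2⟩; exact ⟨n, hn, h1, by linarith⟩
  · rintro ⟨n, hn, h1, h2⟩; exact ⟨n, hn, h1, by linarith⟩

lemma xiMeas_le_s19 {t : ℝ} (ht : 0 ≤ t) : xiMeas hEx τEx t ≤ t / 2 := by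
  have hsub : DoSUnion hEx τEx ∩ Set.Icc 0 t ⊆
      ⋃ n ∈ Finset.Icc 1 (Nat.floor (t/2)), Ico ((2*n+1:ℝ)) (2*n+2) := by
    rintro x ⟨hx, hx0, hxt⟩
    obtain ⟨n, hn, h1, h2⟩ := mem_DoS.mp hx
    simp only [Set.mem_iUnion, Set.mem_Ico]
    refine ⟨n, Finset.mem_Icc.mpr ⟨hn, ?_⟩, h1, h2⟩
    apply Nat.le_floor
    have : 2*(n:ℝ)+1 ≤ t := le_trans h1 hxt
    linarith
  have hle : volume (DoSUnion hEx τEx ∩ Set.Icc 0 t) ≤ _ := measure_mono hsub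
  rw [vol_finU] at hle
  have := ENNReal.toReal_mono (by simp) hle
  simp only [ENNReal.toReal_natCast] at this
  refine le_trans this ?_
  have : ((Nat.floor (t/2) : ℝ)) ≤ t/2 := Nat.floor_le (by linarith)
  linarith

lemma xiMeas_eq (i : ℕ) : xiMeas hEx τEx (2*i+2) = i := by
  have heq : DoSUnion hEx τEx ∩ Set.Icc 0 (2*(i:ℝ)+2) =
      ⋃ n ∈ Finset.Icc 1 i, Ico ((2*n+1:ℝ)) (2*n+2) := by
    apply Set.Subset.antisymm
    · rintro x ⟨hx, hx0, hxt⟩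
      obtain ⟨n, hn, h1, h2⟩ := mem_DoS.mp hx
      simp only [Set.mem_iUnion, Set.mem_Ico]
      refine ⟨n, Finset.mem_Icc.mpr ⟨hn, ?_⟩, h1, h2⟩
      have : (n:ℝ) < i + 1 := by linarith
      exact_mod_cast Nat.lt_add_one_iff.mp (by exact_mod_cast this)
    · intro x hx
      simp only [Set.mem_iUnion, Set.mem_Ico] at hx
      obtain ⟨n, hn, h1, h2⟩ := hx
      rw [Finset.mem_Icc] at hn
      have hni : (n:ℝ) ≤ i := by exact_mod_cast hn.2
      have hn1 : (1:ℝ) ≤ n := by exact_mod_cast hn.1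
      refine ⟨mem_DoS.mpr ⟨n, hn.1, h1, h2⟩, by linarith, by linarith⟩
  rw [xiMeas, heq, vol_finU]; simp

lemma hEx_inj : Function.Injective (fun n : ℕ => (2*(n:ℝ)+1)) := by
  intro a b hab
  simp only at hab
  exact_mod_cast (by linarith : (a:ℝ) = b)

lemma nXi_le_s19 {t : ℝ} (ht : 0 ≤ t) : (nXi hEx t : ℝ) ≤ t / 2 := by
  have hsub : {x : ℝ | ∃ n : ℕ, 1 ≤ n ∧ hEx n = x} ∩ Set.Icc 0 t ⊆
      (fun n : ℕ => (2*(n:ℝ)+1)) '' (Set.Icc 1 (Nat.floor (t/2))) := by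
    rintro x ⟨⟨n, hn, hnx⟩, hx0, hxt⟩
    refine ⟨n, ⟨hn, Nat.le_floor ?_⟩, hnx⟩
    have : 2*(n:ℝ)+1 ≤ t := by rw [show hEx n = 2*(n:ℝ)+1 from rfl] at hnx; linarith
    linarith
  have h1 : nXi hEx t ≤ ((fun n : ℕ => (2*(n:ℝ)+1)) '' (Set.Icc 1 (Nat.floor (t/2)))).ncard := by
    exact Set.ncard_le_ncard hsub ((Set.finite_Icc _ _).image _)
  have h2 : ((fun n : ℕ => (2*(n:ℝ)+1)) '' (Set.Icc 1 (Nat.floor (t/2)))).ncard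
      = Nat.floor (t/2) := by
    rw [Set.ncard_image_of_injective _ hEx_inj, ← Finset.coe_Icc, Set.ncard_coe_finset,
      Nat.card_Icc]
    omega
  have := Nat.floor_le (by linarith : (0:ℝ) ≤ t/2)
  have h3 : (nXi hEx t : ℝ) ≤ (Nat.floor (t/2) : ℝ) := by exact_mod_cast h2 ▸ h1
  linarith

lemma nXi_eq (i : ℕ) : nXi hEx (2*i+1) = i := by
  have heq : {x : ℝ | ∃ n : ℕ, 1 ≤ n ∧ hEx n = x} ∩ Set.Icc 0 (2*(i:ℝ)+1) =
      (fun n : ℕ => (2*(n:ℝ)+1)) '' (Set.Icc 1 i) := by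
    apply Set.Subset.antisymm
    · rintro x ⟨⟨n, hn, hnx⟩, hx0, hxt⟩
      refine ⟨n, ⟨hn, ?_⟩, hnx⟩
      rw [show hEx n = 2*(n:ℝ)+1 from rfl] at hnx
      have : (n:ℝ) ≤ i := by linarith
      exact_mod_cast this
    · rintro x ⟨n, ⟨hn1, hni⟩, rfl⟩
      have hni' : (n:ℝ) ≤ i := by exact_mod_cast hni
      have hn1' : (1:ℝ) ≤ n := by exact_mod_cast hn1
      exact ⟨⟨n, hn1, rfl⟩, by show (0:ℝ) ≤ 2*(n:ℝ)+1; linarith,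
        by show (2*(n:ℝ)+1) ≤ 2*(i:ℝ)+1; linarith⟩
  rw [nXi, heq, Set.ncard_image_of_injective _ hEx_inj, ← Finset.coe_Icc,
    Set.ncard_coe_finset, Nat.card_Icc]
  omega

lemma half_mem_dur : (1/2 : ℝ) ∈ durBounds hEx τEx := by
  refine ⟨by norm_num, by norm_num, 1, by norm_num, fun t ht => ?_⟩
  have := xiMeas_le_s19 ht
  linarith

lemma dur_lower : ∀ B ∈ durBounds hEx τEx, (1/2 : ℝ) ≤ B := by
  rintro B ⟨hB0, hB1, κ, hκ, hb⟩
  by_contra hlt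
  push_neg at hlt
  have h1 : (0:ℝ) < 1 - 2*B := by linarith
  obtain ⟨m, hm⟩ := exists_nat_gt ((κ + 2*B) / (1 - 2*B))
  set N := m + 1 with hN
  have hmN : ((κ + 2*B) / (1 - 2*B)) < (N:ℝ) := by
    push_cast [hN]
    have : (m:ℝ) ≤ m + 1 := by linarith
    linarith
  have hgt : κ + 2*B < (N:ℝ) * (1 - 2*B) := (div_lt_iff₀ h1).mp hmN
  have key : (N:ℝ) ≤ κ + B * (2*N+2) := by
    have ht : (0:ℝ) ≤ 2*(N:ℝ)+2 := by positivity
    have := hb (2*(N:ℝ)+2) ht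
    rw [xiMeas_eq N] at this
    exact this
  nlinarith

lemma half_mem_freq : (1/2 : ℝ) ∈ freqBounds hEx := by
  refine ⟨by norm_num, 1, by norm_num, fun t ht => ?_⟩
  have := nXi_le_s19 ht
  linarith

lemma freq_lower : ∀ B ∈ freqBounds hEx, (1/2 : ℝ) ≤ B := by
  rintro B ⟨hB0, Λ, hΛ, hb⟩
  by_contra hlt
  push_neg at hlt
  have h1 : (0:ℝ) < 1 - 2*B := by linarith
  obtain ⟨m, hm⟩ := exists_nat_gt ((Λ + B) / (1 - 2*B))
  set N := m + 1 with hN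
  have hmN : ((Λ + B) / (1 - 2*B)) < (N:ℝ) := by
    push_cast [hN]
    have : (m:ℝ) ≤ m + 1 := by linarith
    linarith
  have hgt : Λ + B < (N:ℝ) * (1 - 2*B) := (div_lt_iff₀ h1).mp hmN
  have key : (N:ℝ) ≤ Λ + B * (2*N+1) := by
    have ht : (0:ℝ) ≤ 2*(N:ℝ)+1 := by positivity
    have := hb (2*(N:ℝ)+1) ht
    rw [nXi_eq N] at this
    exact this
  nlinarith

/-- Example 4 / Remark 4 (counterexample for `θ = 1`): for this sequence,
`inf D(ξ) = 1/2`, `inf F(ξ) = 1/2`, yet every observed ratio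
`|Ξ(0, h i + τ i)|/(h i + τ i) = i/(2i+2)` is strictly below `1/2`;
consequently all observed ratios are `≤ 1/2` while every duration-bound of `ξ`
is `≥ 1/2`. -/
theorem counterexample_theta_one :
    sInf (durBounds hEx τEx) = 1 / 2 ∧
    sInf (freqBounds hEx) = 1 / 2 ∧
    (∀ i : ℕ, 1 ≤ i →
      xiMeas hEx τEx (hEx i + τEx i) / (hEx i + τEx i)
          = (i : ℝ) / (2 * i + 2) ∧
      (i : ℝ) / (2 * i + 2) < 1 / 2) ∧
    (∀ i : ℕ, 1 ≤ i →
      xiMeas hEx τEx (hEx i + τEx i) / (hEx i + τEx i) ≤ 1 / 2) ∧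
    (∀ B ∈ durBounds hEx τEx, 1 / 2 ≤ B) := by
  have hsum : ∀ i : ℕ, hEx i + τEx i = 2*(i:ℝ)+2 := by
    intro i; simp [hEx, τEx]; ring
  have hratio : ∀ i : ℕ, 1 ≤ i →
      xiMeas hEx τEx (hEx i + τEx i) / (hEx i + τEx i) = (i : ℝ) / (2 * i + 2) := by
    intro i hi
    rw [hsum i, xiMeas_eq i]
  have hlt : ∀ i : ℕ, 1 ≤ i → (i : ℝ) / (2 * i + 2) < 1 / 2 := by
    intro i hi
    have hipos : (0:ℝ) < 2*(i:ℝ)+2 := by positivity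
    rw [div_lt_div_iff₀ hipos (by norm_num : (0:ℝ) < 2)]
    linarith
  refine ⟨?_, ?_, fun i hi => ⟨hratio i hi, hlt i hi⟩, fun i hi => ?_, dur_lower⟩
  · exact le_antisymm (csInf_le ⟨1/2, dur_lower⟩ half_mem_dur)
      (le_csInf ⟨_, half_mem_dur⟩ dur_lower)
  · exact le_antisymm (csInf_le ⟨1/2, freq_lower⟩ half_mem_freq)
      (le_csInf ⟨_, half_mem_freq⟩ freq_lower)
  · rw [hratio i hi]; exact le_of_lt (hlt i hi)
end
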